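/- Let j ≥ 2, let p, q ∈ ℝ[x₁,…,x_j] have positive degree in x_j, let S ⊆ ℝ^{j−1} be a connected set, and let θ, η : ℝ^{j−1} → ℝ be functions that are continuous on S and satisfy p(r, θ(r)) = 0 and q(r, η(r)) = 0 for all r ∈ S. Suppose the resultant of p and q with respect to x_j evaluates to a nonzero value at every r ∈ S, and suppose θ(s₀) < η(s₀) for some s₀ ∈ S. Then θ(r) < η(r) for all r ∈ S. -/

import Mathlib

/-- The Sylvester matrix of two polynomials `p` and `q` over a commutative ring,
viewed with nominal degrees `p.natDegree` and `q.natDegree`: the first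
`q.natDegree` rows contain the shifted coefficient sequences of `p`, the last
`p.natDegree` rows contain the shifted coefficient sequences of `q`. -/
noncomputable def sylvesterMatrix {R : Type*} [CommRing R] (p q : Polynomial R) :
    Matrix (Fin (q.natDegree + p.natDegree)) (Fin (q.natDegree + p.natDegree)) R :=
  fun i j =>
    if (i : ℕ) < q.natDegree then
      if (i : ℕ) ≤ (j : ℕ) ∧ (j : ℕ) ≤ (i : ℕ) + p.natDegree then
        p.coeff (p.natDegree + (i : ℕ) - (j : ℕ))
      else 0
    else
      if (i : ℕ) - q.natDegree ≤ (j : ℕ) ∧ (j : ℕ) ≤ ((i : ℕ) - q.natDegree) + q.natDegree then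
        q.coeff (q.natDegree + ((i : ℕ) - q.natDegree) - (j : ℕ))
      else 0

/-- The resultant of two polynomials, defined as the determinant of their
Sylvester matrix. -/
noncomputable def resultant {R : Type*} [CommRing R] (p q : Polynomial R) : R :=
  (sylvesterMatrix p q).det

private lemma row_sum_aux (a : ℕ → ℝ) (n N i : ℕ) (hi : i + n < N) (t : ℝ) :
    ∑ j ∈ Finset.range N, (if i ≤ j ∧ j ≤ i + n then a (n + i - j) * t ^ (N - 1 - j) else 0)
      = t ^ (N - 1 - n - i) * ∑ k ∈ Finset.range (n + 1), a k * t ^ k := by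
  rw [← Finset.sum_filter, Finset.mul_sum]
  apply Finset.sum_nbij' (fun j => i + n - j) (fun k => i + n - k)
  · intro x hx
    simp only [Finset.mem_filter, Finset.mem_range] at hx ⊢
    omega
  · intro x hx
    simp only [Finset.mem_filter, Finset.mem_range] at hx ⊢
    omega
  · intro x hx
    simp only [Finset.mem_filter, Finset.mem_range] at hx
    omega
  · intro x hx
    simp only [Finset.mem_range] at hx
    omega
  · intro x hx
    simp only [Finset.mem_filter, Finset.mem_range] at hx
    have h1 : n + i - x = i + n - x := by omega
    have h2 : N - 1 - x = (N - 1 - n - i) + (i + n - x) := by omega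
    rw [h1, h2, pow_add]
    ring

/-- If `t` is a common root of `p` and `q` after applying the ring hom `φ`,
then `φ` kills the resultant. -/
private lemma resultant_eval_eq_zero {R : Type*} [CommRing R] (φ : R →+* ℝ)
    (p q : Polynomial R) (hp : 0 < p.natDegree) (t : ℝ)
    (hpt : Polynomial.eval₂ φ t p = 0) (hqt : Polynomial.eval₂ φ t q = 0) :
    φ (resultant p q) = 0 := by
  set n := p.natDegree with hn
  set m := q.natDegree with hm
  set N := m + n with hN
  have hN0 : 0 < N := by omega
  rw [resultant, RingHom.map_det]
  rw [← Matrix.exists_mulVec_eq_zero_iff]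
  refine ⟨fun j => t ^ (N - 1 - (j : ℕ)), ?_, ?_⟩
  · intro hv
    have := congrFun hv ⟨N - 1, by omega⟩
    simp only [Pi.zero_apply] at this
    rw [show N - 1 - (N - 1) = 0 by omega] at this
    simp at this
  · funext i
    simp only [Matrix.mulVec, dotProduct, Pi.zero_apply]
    have hmap : ∀ (c : R) (b : Prop) [Decidable b],
        φ (if b then c else 0) = if b then φ c else 0 := by
      intro c b _; split <;> simp
    have hsum : ∀ (P : Polynomial R),
        ∑ k ∈ Finset.range (P.natDegree + 1), φ (P.coeff k) * t ^ k
          = Polynomial.eval₂ φ t P := by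
      intro P
      rw [← Polynomial.eval_map]
      rw [Polynomial.eval_eq_sum_range'
        (Nat.lt_succ_of_le (Polynomial.natDegree_map_le (f := φ) (p := P)))]
      simp [Polynomial.coeff_map]
    by_cases hi : (i : ℕ) < m
    · have : ∑ x : Fin N, (RingHom.mapMatrix φ) (sylvesterMatrix p q) i x * t ^ (N - 1 - (x : ℕ))
          = ∑ jx ∈ Finset.range N,
            (if (i : ℕ) ≤ jx ∧ jx ≤ (i : ℕ) + n then φ (p.coeff (n + (i : ℕ) - jx)) * t ^ (N - 1 - jx) else 0) := by
        rw [Finset.sum_range fun jx => _]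
        apply Finset.sum_congr rfl
        intro x _
        simp only [RingHom.mapMatrix_apply, Matrix.map_apply, sylvesterMatrix, if_pos (show (i : ℕ) < q.natDegree from hi), hmap]
        split <;> simp <;> exact Or.inl rfl
      rw [this, row_sum_aux (fun k => φ (p.coeff k)) n N (i : ℕ) (by omega) t]
      rw [show n + 1 = p.natDegree + 1 from rfl, hsum p, hpt, mul_zero]
    · have hi' : (i : ℕ) - m + m < N := by
        have := i.isLt
        omega
      have : ∑ x : Fin N, (RingHom.mapMatrix φ) (sylvesterMatrix p q) i x * t ^ (N - 1 - (x : ℕ))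
          = ∑ jx ∈ Finset.range N,
            (if (i : ℕ) - m ≤ jx ∧ jx ≤ ((i : ℕ) - m) + m then φ (q.coeff (m + ((i : ℕ) - m) - jx)) * t ^ (N - 1 - jx) else 0) := by
        rw [Finset.sum_range fun jx => _]
        apply Finset.sum_congr rfl
        intro x _
        simp only [RingHom.mapMatrix_apply, Matrix.map_apply, sylvesterMatrix, if_neg (show ¬ (i : ℕ) < q.natDegree from hi), hmap]
        split <;> simp <;> exact Or.inl rfl
      rw [this, row_sum_aux (fun k => φ (q.coeff k)) m N ((i : ℕ) - m) hi' t]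
      rw [show m + 1 = q.natDegree + 1 from rfl, hsum q, hqt, mul_zero]

/-- Let `j ≥ 2`, let `p, q ∈ ℝ[x₁,…,x_j]` have positive degree in
`x_j` (viewed as univariate in `x_j` over `ℝ[x₁,…,x_{j-1}]`), let `S ⊆ ℝ^{j-1}` be a
connected set, and let `θ, η` be continuous on `S` with `p(r, θ(r)) = 0` and
`q(r, η(r)) = 0` for all `r ∈ S`. If the resultant of `p` and `q` w.r.t. `x_j` is
nonzero at every `r ∈ S`, and `θ(s₀) < η(s₀)` for some `s₀ ∈ S`, then `θ(r) < η(r)`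
for all `r ∈ S`. -/
theorem stmt_6 (j : ℕ) (hj : 2 ≤ j)
    (p q : Polynomial (MvPolynomial (Fin (j - 1)) ℝ))
    (hp : 0 < p.natDegree) (hq : 0 < q.natDegree)
    (S : Set (Fin (j - 1) → ℝ)) (hS : IsConnected S)
    (θ η : (Fin (j - 1) → ℝ) → ℝ)
    (hθc : ContinuousOn θ S) (hηc : ContinuousOn η S)
    (hθ : ∀ r ∈ S, Polynomial.eval₂ (MvPolynomial.eval r) (θ r) p = 0)
    (hη : ∀ r ∈ S, Polynomial.eval₂ (MvPolynomial.eval r) (η r) q = 0)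
    (hres : ∀ r ∈ S, MvPolynomial.eval r (resultant p q) ≠ 0)
    (s₀ : Fin (j - 1) → ℝ) (hs₀ : s₀ ∈ S) (hlt : θ s₀ < η s₀) :
    ∀ r ∈ S, θ r < η r := by
  have hne : ∀ r ∈ S, η r - θ r ≠ 0 := by
    intro r hr h
    have heq : θ r = η r := by linarith [sub_eq_zero.mp h]
    apply hres r hr
    exact resultant_eval_eq_zero (MvPolynomial.eval r) p q hp (θ r) (hθ r hr)
      (heq ▸ hη r hr)
  intro r hr
  by_contra hle
  push_neg at hle
  have hlt' : η r - θ r < 0 := by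
    rcases lt_or_eq_of_le hle with h | h
    · linarith
    · exact absurd (by linarith : η r - θ r = 0) (hne r hr)
  have himg : IsConnected ((fun x => η x - θ x) '' S) :=
    hS.image _ (hηc.sub hθc)
  have h0 : (0 : ℝ) ∈ (fun x => η x - θ x) '' S := by
    have := himg.isPreconnected.Icc_subset
      (Set.mem_image_of_mem _ hr) (Set.mem_image_of_mem _ hs₀)
    exact this ⟨le_of_lt hlt', by linarith⟩
  obtain ⟨x, hx, hx0⟩ := h0
  exact hne x hx hx0
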